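/- Let cᵢ, dᵢ ≥ 0 with cᵢ + dᵢ > 0, and for each z ∈ {0,1}^N define matrices C(z), D(z) with entries Cᵢⱼ = Aᵢⱼ zⱼ and Dᵢⱼ = Aᵢⱼ(1 − zⱼ), where A is a 0–1 matrix. For x, y in the nonnegative orthant of ℝ^N, set fᵢ(x, y, z) = (cᵢ + (C(z)y)ᵢ) / (cᵢ + dᵢ + (C(z)y)ᵢ + (D(z)x)ᵢ). Then for any probability weights p(z) ≥ 0 summing to 1, the function F(x, y) = (1/N) ∑ᵢ ∑_z fᵢ(x, y, z) p(z) is convex in x for each fixed y, and concave in y for each fixed x, on the nonnegative orthant. -/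

import Mathlib

open Finset

lemma orth_convex {N : ℕ} : Convex ℝ {x : Fin N → ℝ | ∀ i, 0 ≤ x i} := by
  intro x hx y hy a b ha hb hab i
  have := add_nonneg (mul_nonneg ha (hx i)) (mul_nonneg hb (hy i))
  simpa [smul_eq_mul] using this

lemma scalar_ineq (s t a b : ℝ) (hs : 0 < s) (ht : 0 < t) (ha : 0 ≤ a) (hb : 0 ≤ b)
    (hab : a + b = 1) : (a * s + b * t)⁻¹ ≤ a * s⁻¹ + b * t⁻¹ := by
  have h1 : 0 < a * s + b * t := by
    rcases eq_or_lt_of_le ha with h | h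
    · have hb1 : b = 1 := by linarith
      rw [← h, hb1]; simpa using ht
    · nlinarith [mul_pos h hs, mul_nonneg hb ht.le]
  rw [inv_eq_one_div, div_le_iff₀ h1, inv_eq_one_div, inv_eq_one_div]
  field_simp
  rw [show a * t + s * b = a * t + b * s by ring]
  have h2 : (a * t + b * s) * (a * s + b * t) = (a + b) ^ 2 * (s * t) + a * b * (s - t) ^ 2 := by
    ring
  rw [h2, hab]
  nlinarith [mul_nonneg (mul_nonneg ha hb) (sq_nonneg (s - t))]

lemma core_convex {N : ℕ} (K b : ℝ) (hK : 0 ≤ K) (hb : 0 < b) (w : Fin N → ℝ)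
    (hw : ∀ j, 0 ≤ w j) :
    ConvexOn ℝ {x : Fin N → ℝ | ∀ i, 0 ≤ x i} (fun x => K * (b + ∑ j, w j * x j)⁻¹) := by
  refine ⟨orth_convex, ?_⟩
  intro x hx y hy a a' ha ha' hab
  have hs : 0 < b + ∑ j, w j * x j :=
    add_pos_of_pos_of_nonneg hb (Finset.sum_nonneg fun j _ => mul_nonneg (hw j) (hx j))
  have ht : 0 < b + ∑ j, w j * y j :=
    add_pos_of_pos_of_nonneg hb (Finset.sum_nonneg fun j _ => mul_nonneg (hw j) (hy j))
  have hcomb : b + ∑ j, w j * (a • x + a' • y) j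
      = a * (b + ∑ j, w j * x j) + a' * (b + ∑ j, w j * y j) := by
    have h1 : ∀ j ∈ Finset.univ (α := Fin N),
        w j * (a • x + a' • y) j = a * (w j * x j) + a' * (w j * y j) := by
      intro j _; simp only [Pi.add_apply, Pi.smul_apply, smul_eq_mul]; ring
    rw [Finset.sum_congr rfl h1, Finset.sum_add_distrib, ← Finset.mul_sum, ← Finset.mul_sum]
    linear_combination b * hab.symm
  simp only [smul_eq_mul]
  rw [hcomb]
  have h := scalar_ineq _ _ a a' hs ht ha ha' hab
  calc K * (a * (b + ∑ j, w j * x j) + a' * (b + ∑ j, w j * y j))⁻¹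
      ≤ K * (a * (b + ∑ j, w j * x j)⁻¹ + a' * (b + ∑ j, w j * y j)⁻¹) :=
        mul_le_mul_of_nonneg_left h hK
    _ = a * (K * (b + ∑ j, w j * x j)⁻¹) + a' * (K * (b + ∑ j, w j * y j)⁻¹) := by ring

lemma concaveOn_congr' {E : Type*} [AddCommGroup E] [Module ℝ E] {s : Set E} {f g : E → ℝ}
    (hg : ConcaveOn ℝ s g) (h : ∀ x ∈ s, f x = g x) : ConcaveOn ℝ s f := by
  refine ⟨hg.1, fun x hx y hy a b ha hb hab => ?_⟩
  rw [h _ (hg.1 hx hy ha hb hab), h _ hx, h _ hy]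
  exact hg.2 hx hy ha hb hab

lemma convexOn_finset_sum {E : Type*} [AddCommGroup E] [Module ℝ E] {ι : Type*}
    (t : Finset ι) {s : Set E} (hs : Convex ℝ s) {f : ι → E → ℝ}
    (hf : ∀ i ∈ t, ConvexOn ℝ s (f i)) : ConvexOn ℝ s (fun x => ∑ i ∈ t, f i x) := by
  classical
  induction t using Finset.induction with
  | empty => simpa using convexOn_const (0 : ℝ) hs
  | insert _ _ h ih =>
      simp only [Finset.sum_insert h]
      exact (hf _ (Finset.mem_insert_self _ _)).add
        (ih fun i hi => hf i (Finset.mem_insert_of_mem hi))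

lemma concaveOn_finset_sum {E : Type*} [AddCommGroup E] [Module ℝ E] {ι : Type*}
    (t : Finset ι) {s : Set E} (hs : Convex ℝ s) {f : ι → E → ℝ}
    (hf : ∀ i ∈ t, ConcaveOn ℝ s (f i)) : ConcaveOn ℝ s (fun x => ∑ i ∈ t, f i x) := by
  classical
  induction t using Finset.induction with
  | empty => simpa using concaveOn_const (0 : ℝ) hs
  | insert _ _ h ih =>
      simp only [Finset.sum_insert h]
      exact (hf _ (Finset.mem_insert_self _ _)).add
        (ih fun i hi => hf i (Finset.mem_insert_of_mem hi))

/-- Proposition 1: With `C(z)ᵢⱼ = Aᵢⱼ zⱼ`, `D(z)ᵢⱼ = Aᵢⱼ(1 − zⱼ)` for a 0–1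
matrix `A`, and `fᵢ(x,y,z) = (cᵢ + (C(z)y)ᵢ)/(cᵢ + dᵢ + (C(z)y)ᵢ + (D(z)x)ᵢ)`, the expected
network exposure `F(x,y) = (1/N) ∑ᵢ ∑_z fᵢ(x,y,z) p(z)` is convex in `x` and concave in `y`
on the nonnegative orthant. -/
theorem stmt_5 {N : ℕ} (A : Fin N → Fin N → ℝ) (hA : ∀ i j, A i j = 0 ∨ A i j = 1)
    (c d : Fin N → ℝ) (hc : ∀ i, 0 ≤ c i) (hd : ∀ i, 0 ≤ d i) (hcd : ∀ i, 0 < c i + d i)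
    (p : (Fin N → Bool) → ℝ) (hp : ∀ z, 0 ≤ p z) (hp1 : ∑ z : Fin N → Bool, p z = 1)
    (F : (Fin N → ℝ) → (Fin N → ℝ) → ℝ)
    (hF : ∀ x y, F x y = (1 / (N : ℝ)) * ∑ i, ∑ z : Fin N → Bool,
      ((c i + ∑ j, A i j * (if z j then (1:ℝ) else 0) * y j) /
        (c i + d i + (∑ j, A i j * (if z j then (1:ℝ) else 0) * y j)
          + ∑ j, A i j * (1 - if z j then (1:ℝ) else 0) * x j)) * p z) :
    (∀ y ∈ {y : Fin N → ℝ | ∀ i, 0 ≤ y i},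
      ConvexOn ℝ {x : Fin N → ℝ | ∀ i, 0 ≤ x i} (fun x => F x y)) ∧
    (∀ x ∈ {x : Fin N → ℝ | ∀ i, 0 ≤ x i},
      ConcaveOn ℝ {y : Fin N → ℝ | ∀ i, 0 ≤ y i} (fun y => F x y)) := by
  have hAnn : ∀ i j, 0 ≤ A i j := fun i j => by rcases hA i j with h | h <;> simp [h]
  have hχ : ∀ (z : Fin N → Bool) (j : Fin N), 0 ≤ (if z j then (1:ℝ) else 0) := by
    intro z j; split <;> norm_num
  have hχ1 : ∀ (z : Fin N → Bool) (j : Fin N), 0 ≤ 1 - (if z j then (1:ℝ) else 0) := by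
    intro z j; split <;> norm_num
  have hN : (0:ℝ) ≤ 1 / (N : ℝ) := by positivity
  constructor
  · intro y hy
    have hFy : (fun x => F x y) = fun x => (1 / (N : ℝ)) * ∑ i, ∑ z : Fin N → Bool,
        ((c i + ∑ j, A i j * (if z j then (1:ℝ) else 0) * y j) /
          (c i + d i + (∑ j, A i j * (if z j then (1:ℝ) else 0) * y j)
            + ∑ j, A i j * (1 - if z j then (1:ℝ) else 0) * x j)) * p z :=
      funext fun x => hF x y
    rw [hFy]
    have hmain : ConvexOn ℝ {x : Fin N → ℝ | ∀ i, 0 ≤ x i}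
        (fun x => ∑ i, ∑ z : Fin N → Bool,
        ((c i + ∑ j, A i j * (if z j then (1:ℝ) else 0) * y j) /
          (c i + d i + (∑ j, A i j * (if z j then (1:ℝ) else 0) * y j)
            + ∑ j, A i j * (1 - if z j then (1:ℝ) else 0) * x j)) * p z) := by
      refine convexOn_finset_sum _ orth_convex fun i _ => ?_
      refine convexOn_finset_sum _ orth_convex fun z _ => ?_
      set S : ℝ := ∑ j, A i j * (if z j then (1:ℝ) else 0) * y j with hS
      have hSnn : 0 ≤ S :=
        Finset.sum_nonneg fun j _ => mul_nonneg (mul_nonneg (hAnn i j) (hχ z j)) (hy j)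
      have hb : 0 < c i + d i + S := add_pos_of_pos_of_nonneg (hcd i) hSnn
      have heq : (fun x : Fin N → ℝ =>
          ((c i + S) / (c i + d i + S
            + ∑ j, A i j * (1 - if z j then (1:ℝ) else 0) * x j)) * p z)
          = fun x => ((c i + S) * p z) * ((c i + d i + S)
            + ∑ j, (A i j * (1 - if z j then (1:ℝ) else 0)) * x j)⁻¹ := by
        funext x
        rw [div_eq_mul_inv]
        have : ∑ j, A i j * (1 - if z j then (1:ℝ) else 0) * x j
            = ∑ j, (A i j * (1 - if z j then (1:ℝ) else 0)) * x j := by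
          apply Finset.sum_congr rfl; intros; ring
        rw [this]; ring
      rw [heq]
      exact core_convex _ _ (mul_nonneg (add_nonneg (hc i) hSnn) (hp z)) hb _
        (fun j => mul_nonneg (hAnn i j) (hχ1 z j))
    simpa only [smul_eq_mul] using hmain.smul hN
  · intro x hx
    have hFx : (fun y => F x y) = fun y => (1 / (N : ℝ)) * ∑ i, ∑ z : Fin N → Bool,
        ((c i + ∑ j, A i j * (if z j then (1:ℝ) else 0) * y j) /
          (c i + d i + (∑ j, A i j * (if z j then (1:ℝ) else 0) * y j)
            + ∑ j, A i j * (1 - if z j then (1:ℝ) else 0) * x j)) * p z :=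
      funext fun y => hF x y
    rw [hFx]
    have hmain : ConcaveOn ℝ {y : Fin N → ℝ | ∀ i, 0 ≤ y i}
        (fun y => ∑ i, ∑ z : Fin N → Bool,
        ((c i + ∑ j, A i j * (if z j then (1:ℝ) else 0) * y j) /
          (c i + d i + (∑ j, A i j * (if z j then (1:ℝ) else 0) * y j)
            + ∑ j, A i j * (1 - if z j then (1:ℝ) else 0) * x j)) * p z) := by
      refine concaveOn_finset_sum _ orth_convex fun i _ => ?_
      refine concaveOn_finset_sum _ orth_convex fun z _ => ?_
      set Dx : ℝ := ∑ j, A i j * (1 - if z j then (1:ℝ) else 0) * x j with hDx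
      have hDnn : 0 ≤ Dx :=
        Finset.sum_nonneg fun j _ => mul_nonneg (mul_nonneg (hAnn i j) (hχ1 z j)) (hx j)
      have hb : 0 < c i + d i + Dx := add_pos_of_pos_of_nonneg (hcd i) hDnn
      have hM : 0 ≤ d i + Dx := add_nonneg (hd i) hDnn
      have hcore := ((core_convex (N := N) (d i + Dx) (c i + d i + Dx) hM hb
          (fun j => A i j * (if z j then (1:ℝ) else 0))
          (fun j => mul_nonneg (hAnn i j) (hχ z j))).neg.add_const 1).smul (hp z)
      refine concaveOn_congr' hcore ?_
      intro y hySet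
      set S : ℝ := ∑ j, A i j * (if z j then (1:ℝ) else 0) * y j with hS
      have hSnn : 0 ≤ S :=
        Finset.sum_nonneg fun j _ => mul_nonneg (mul_nonneg (hAnn i j) (hχ z j)) (hySet j)
      have hden : 0 < c i + d i + Dx + S := add_pos_of_pos_of_nonneg hb hSnn
      have hd2 : c i + d i + S + Dx = c i + d i + Dx + S := by ring
      simp only [Pi.add_apply, Pi.neg_apply, smul_eq_mul]
      rw [div_eq_mul_inv, hd2]
      have key : (c i + S) * (c i + d i + Dx + S)⁻¹
          = -((d i + Dx) * (c i + d i + Dx + S)⁻¹) + 1 := by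
        rw [neg_add_eq_sub, eq_sub_iff_add_eq, ← add_mul]
        have e : (c i + S) + (d i + Dx) = c i + d i + Dx + S := by ring
        rw [e]
        exact mul_inv_cancel₀ hden.ne'
      rw [key]
      ring
    simpa only [smul_eq_mul] using hmain.smul hN
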